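/- The Shapley share of the (n+1)-th smallest request, written as a function of that request p, equals p/(M − n) − ∑_{k=1}^{n} p_k / ((M − k)(M − k + 1)). Consequently, as a function of p (over the interval where p remains the (n+1)-th smallest request), the Shapley share is linear with slope 1/(M − n); and since the slope 1/(M − n) is increasing in n while the y-intercept decreases (each added term is negative), the Shapley share as a function of p over [0, ∞) is a piecewise-linear, monotonically nondecreasing, continuous function of p. -/

import Mathlib

open Finset

/-- Shapley value of player `i` for coalition cost function `P` on `M` players. -/
noncomputable def shapley (M : ℕ) (P : Finset (Fin M) → ℝ) (i : Fin M) : ℝ :=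
  ∑ S ∈ (Finset.univ.erase i).powerset,
    ((Nat.factorial S.card * Nat.factorial (M - S.card - 1) : ℕ) : ℝ) / (Nat.factorial M : ℝ)
      * (P (insert i S) - P S)

/-- Radio-link cost of a coalition: the maximum request in it (0 for the empty coalition). -/
noncomputable def maxCost (M : ℕ) (r : Fin M → ℝ) (S : Finset (Fin M)) : ℝ :=
  if h : S.Nonempty then S.sup' h r else 0


/-- Shapley weight. -/
noncomputable def sw (M s : ℕ) : ℝ :=
  ((Nat.factorial s * Nat.factorial (M - s - 1) : ℕ) : ℝ) / (Nat.factorial M : ℝ)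

lemma sw_nonneg (M s : ℕ) : 0 ≤ sw M s :=
  div_nonneg (Nat.cast_nonneg _) (Nat.cast_nonneg _)

lemma natkey (M b : ℕ) (hb : b + 1 ≤ M) :
    ∑ s ∈ range (b + 1), b.choose s * (s.factorial * (M - s - 1).factorial)
      = b.factorial * ((M - b - 1).factorial * M.choose b) := by
  have hcs : M.choose b = (b + (M - b - 1) + 1).choose ((M - b - 1) + 1) := by
    have h1 : b + (M - b - 1) + 1 = M := by omega
    have h2 : (M - b - 1) + 1 = M - b := by omega
    rw [h1, h2, Nat.choose_symm (by omega)]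
  rw [hcs, ← Nat.sum_range_add_choose b (M - b - 1), Finset.mul_sum, Finset.mul_sum,
    ← Finset.sum_range_reflect (fun s => b.choose s * (s.factorial * (M - s - 1).factorial)) (b+1)]
  apply Finset.sum_congr rfl
  intro s hs
  rw [Finset.mem_range] at hs
  have hs' : s ≤ b := by omega
  simp only [Nat.add_sub_cancel]
  set c := M - b - 1 with hc
  have e2 : M - (b - s) - 1 = c + s := by omega
  rw [e2]
  have h1 : b.choose (b - s) * (b - s).factorial * s.factorial = b.factorial := by
    have := Nat.choose_mul_factorial_mul_factorial (Nat.sub_le b s)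
    rwa [Nat.sub_sub_self hs'] at this
  have h2 : (c + s).choose c * c.factorial * s.factorial = (c + s).factorial := by
    have := Nat.choose_mul_factorial_mul_factorial (Nat.le_add_right c s)
    simpa using this
  apply Nat.eq_of_mul_eq_mul_right (Nat.factorial_pos s)
  calc b.choose (b - s) * ((b - s).factorial * (c + s).factorial) * s.factorial
      = (b.choose (b - s) * (b - s).factorial * s.factorial) * (c + s).factorial := by ring
    _ = b.factorial * (c + s).factorial := by rw [h1]
    _ = b.factorial * ((c + s).choose c * c.factorial * s.factorial) := by rw [h2]
    _ = b.factorial * (c.factorial * (s + c).choose c) * s.factorial := by rw [Nat.add_comm s c]; ring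

lemma sw_sum {α : Type*} [DecidableEq α] (M : ℕ) (B : Finset α) (hb : B.card + 1 ≤ M) :
    ∑ S ∈ B.powerset, sw M S.card = 1 / ((M : ℝ) - B.card) := by
  rw [Finset.sum_powerset_apply_card (fun m => sw M m)]
  have hcast : ((M : ℝ) - B.card) = ((M - B.card : ℕ) : ℝ) := by
    push_cast [Nat.cast_sub (by omega : B.card ≤ M)]; ring
  rw [hcast]
  unfold sw
  rw [Finset.sum_congr rfl (fun m _ => (nsmul_eq_mul _ _))]
  have : ∑ m ∈ range (B.card + 1),
      ((B.card.choose m : ℝ)) * (((Nat.factorial m * Nat.factorial (M - m - 1) : ℕ) : ℝ) / (Nat.factorial M : ℝ))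
      = ((∑ s ∈ range (B.card + 1), B.card.choose s * (s.factorial * (M - s - 1).factorial) : ℕ) : ℝ)
        / (Nat.factorial M : ℝ) := by
    push_cast
    rw [Finset.sum_div]
    apply Finset.sum_congr rfl
    intro m _
    ring
  rw [this, natkey M B.card hb]
  rw [div_eq_div_iff (by positivity) (by
    have : 0 < M - B.card := by omega
    positivity)]
  rw [one_mul]
  have hnat : (Nat.factorial B.card * ((M - B.card - 1).factorial * M.choose B.card)) * (M - B.card)
      = M.factorial := by
    have h3 : (M - B.card) * (M - B.card - 1).factorial = (M - B.card).factorial := by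
      conv_rhs => rw [show M - B.card = (M - B.card - 1) + 1 by omega, Nat.factorial_succ]
      congr 1
      omega
    calc (Nat.factorial B.card * ((M - B.card - 1).factorial * M.choose B.card)) * (M - B.card)
        = M.choose B.card * B.card.factorial * ((M - B.card) * (M - B.card - 1).factorial) := by ring
      _ = M.choose B.card * B.card.factorial * (M - B.card).factorial := by rw [h3]
      _ = M.factorial := Nat.choose_mul_factorial_mul_factorial (by omega)
  exact_mod_cast hnat


def idxSet (M n : ℕ) : Finset (Fin M) := univ.filter (fun j => (j : ℕ) < n)

lemma idxSet_zero (M : ℕ) : idxSet M 0 = ∅ := by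
  ext j; simp [idxSet]

lemma mem_idxSet {M n : ℕ} {j : Fin M} : j ∈ idxSet M n ↔ (j : ℕ) < n := by
  simp [idxSet]

lemma idxSet_succ (M n : ℕ) (hn : n < M) :
    idxSet M (n + 1) = insert (⟨n, hn⟩ : Fin M) (idxSet M n) := by
  ext j
  simp only [mem_idxSet, mem_insert, Fin.ext_iff]
  omega

lemma not_mem_idxSet_self (M n : ℕ) (hn : n < M) : (⟨n, hn⟩ : Fin M) ∉ idxSet M n := by
  simp [mem_idxSet]

lemma card_idxSet (M n : ℕ) (hn : n ≤ M) : (idxSet M n).card = n := by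
  induction n with
  | zero => simp [idxSet_zero]
  | succ m ih =>
    rw [idxSet_succ M m (by omega), card_insert_of_notMem (not_mem_idxSet_self M m (by omega)),
      ih (by omega)]

lemma maxCost_insert_eq {M : ℕ} (f : Fin M → ℝ) {x : Fin M} {T : Finset (Fin M)}
    (hle : ∀ j ∈ T, f j ≤ f x) : maxCost M f (insert x T) = f x := by
  unfold maxCost
  rcases T.eq_empty_or_nonempty with h | h
  · subst h; rw [dif_pos (insert_nonempty _ _)]; simp
  · rw [dif_pos (insert_nonempty _ _), sup'_insert h]
    exact sup_eq_left.mpr (sup'_le h f hle)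

lemma Gval (M : ℕ) (hM : 1 ≤ M) (q : ℕ → ℝ)
    (hqmono : ∀ a b, a ≤ b → b ≤ M - 1 → q a ≤ q b) (f : Fin M → ℝ)
    (hf : ∀ j : Fin M, (j : ℕ) + 1 < M → f j = q ((j : ℕ) + 1)) :
    ∀ n, n ≤ M - 1 →
      ∑ S ∈ (idxSet M n).powerset, sw M S.card * maxCost M f S
        = ∑ k ∈ range n, q (k + 1) * (1 / ((M : ℝ) - (k + 1)) - 1 / ((M : ℝ) - k)) := by
  intro n
  induction n with
  | zero =>
    intro _
    simp [idxSet_zero, maxCost]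
  | succ m ih =>
    intro hm
    have hmM : m < M := by omega
    have hx := not_mem_idxSet_self M m hmM
    rw [idxSet_succ M m hmM, Finset.sum_powerset_insert hx, ih (by omega)]
    have hmc : ∀ T ∈ (idxSet M m).powerset,
        maxCost M f (insert (⟨m, hmM⟩ : Fin M) T) = q (m + 1) := by
      intro T hT
      rw [mem_powerset] at hT
      have hfx : f ⟨m, hmM⟩ = q (m + 1) := hf _ (by simpa using by omega)
      rw [maxCost_insert_eq f]
      · exact hfx
      · intro j hj
        have hjm : (j : ℕ) < m := mem_idxSet.mp (hT hj)
        rw [hf j (by omega), hfx]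
        exact hqmono _ _ (by omega) (by omega)
    have hcard : ∀ T ∈ (idxSet M m).powerset,
        (insert (⟨m, hmM⟩ : Fin M) T).card = T.card + 1 := by
      intro T hT
      rw [mem_powerset] at hT
      exact card_insert_of_notMem (fun h => hx (hT h))
    have hsum2 : ∑ T ∈ (idxSet M m).powerset,
        sw M (insert (⟨m, hmM⟩ : Fin M) T).card * maxCost M f (insert (⟨m, hmM⟩ : Fin M) T)
        = q (m + 1) * ∑ T ∈ (idxSet M m).powerset, sw M (T.card + 1) := by
      rw [Finset.mul_sum]
      apply Finset.sum_congr rfl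
      intro T hT
      rw [hmc T hT, hcard T hT]
      ring
    -- the weight sum identity
    have hW1 : ∑ S ∈ (idxSet M m).powerset, sw M S.card = 1 / ((M : ℝ) - m) := by
      have := sw_sum M (idxSet M m) (by rw [card_idxSet M m (by omega)]; omega)
      rwa [card_idxSet M m (by omega)] at this
    have hW2 : ∑ S ∈ (idxSet M (m + 1)).powerset, sw M S.card = 1 / ((M : ℝ) - (m + 1)) := by
      have h1 := sw_sum M (idxSet M (m + 1)) (by rw [card_idxSet M (m+1) (by omega)]; omega)
      rw [card_idxSet M (m+1) (by omega)] at h1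
      rw [h1]
      push_cast
      ring_nf
    have hsplit : ∑ S ∈ (idxSet M (m + 1)).powerset, sw M S.card
        = (∑ S ∈ (idxSet M m).powerset, sw M S.card)
          + ∑ T ∈ (idxSet M m).powerset, sw M (T.card + 1) := by
      rw [idxSet_succ M m hmM, Finset.sum_powerset_insert hx]
      congr 1
      exact Finset.sum_congr rfl fun T hT => by rw [hcard T hT]
    have hw' : ∑ T ∈ (idxSet M m).powerset, sw M (T.card + 1)
        = 1 / ((M : ℝ) - (m + 1)) - 1 / ((M : ℝ) - m) := by
      rw [hW2, hW1] at hsplit; linarith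
    rw [hsum2, hw', Finset.sum_range_succ]

lemma maxCost_insert_pair {M : ℕ} (f : Fin M → ℝ) (x : Fin M) {S : Finset (Fin M)}
    (hS : S.Nonempty) : maxCost M f (insert x S) = f x ⊔ maxCost M f S := by
  unfold maxCost
  rw [dif_pos (insert_nonempty _ _), dif_pos hS, sup'_insert hS]


theorem shapley_share_piecewise_linear (M : ℕ) (hM : 1 ≤ M) (q : ℕ → ℝ) (hq0 : q 0 = 0)
    (hqnn : ∀ n, 0 ≤ q n) (hqmono : ∀ a b, a ≤ b → b ≤ M - 1 → q a ≤ q b) :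
    let F : ℝ → ℝ := fun p =>
      shapley M (maxCost M (fun j => if j.1 + 1 < M then q (j.1 + 1) else p))
        ⟨M - 1, Nat.sub_lt hM one_pos⟩
    (∀ (n : ℕ) (p : ℝ), n ≤ M - 1 → q n ≤ p → (n + 1 ≤ M - 1 → p ≤ q (n + 1)) →
        F p = p / ((M : ℝ) - n)
          - ∑ k ∈ Finset.range n, q (k + 1) / (((M : ℝ) - (k + 1)) * ((M : ℝ) - k)))
      ∧ MonotoneOn F (Set.Ici 0) ∧ ContinuousOn F (Set.Ici 0) := by
  intro F
  set i : Fin M := ⟨M - 1, Nat.sub_lt hM one_pos⟩ with hidef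
  set r : ℝ → Fin M → ℝ := fun p j => if j.1 + 1 < M then q (j.1 + 1) else p with hrdef
  have hFdef : ∀ p, F p = ∑ S ∈ (Finset.univ.erase i).powerset,
      sw M S.card * (maxCost M (r p) (insert i S) - maxCost M (r p) S) := fun p => rfl
  have hri : ∀ p, r p i = p := by
    intro p
    show (if M - 1 + 1 < M then q (M - 1 + 1) else p) = p
    rw [if_neg (by omega)]
  have hrq : ∀ (p : ℝ) (j : Fin M), (j : ℕ) < M - 1 → r p j = q ((j : ℕ) + 1) := by
    intro p j hj
    show (if (j : ℕ) + 1 < M then q ((j : ℕ) + 1) else p) = q ((j : ℕ) + 1)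
    rw [if_pos (by omega)]
  have hjerase : ∀ j : Fin M, j ∈ Finset.univ.erase i → (j : ℕ) < M - 1 := by
    intro j hj
    have h1 := (mem_erase.mp hj).1
    have h2 : (j : ℕ) ≠ M - 1 := fun h => h1 (Fin.ext h)
    have := j.isLt
    omega
  constructor
  · -- the formula
    intro n p hn hp1 hp2
    have hp0 : 0 ≤ p := le_trans (hqnn n) hp1
    have hsubset : idxSet M n ⊆ Finset.univ.erase i := by
      intro j hj
      rw [mem_idxSet] at hj
      rw [mem_erase]
      refine ⟨?_, mem_univ j⟩
      intro h
      have : (j : ℕ) = M - 1 := by rw [h]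
      omega
    have hvanish : ∀ S ∈ (Finset.univ.erase i).powerset, S ∉ (idxSet M n).powerset →
        sw M S.card * (maxCost M (r p) (insert i S) - maxCost M (r p) S) = 0 := by
      intro S hS hS2
      rw [mem_powerset] at hS hS2
      obtain ⟨j, hjS, hjn⟩ := Finset.not_subset.mp hS2
      rw [mem_idxSet] at hjn
      have hjlt : (j : ℕ) < M - 1 := hjerase j (hS hjS)
      have hSne : S.Nonempty := ⟨j, hjS⟩
      have hcS : p ≤ maxCost M (r p) S := by
        unfold maxCost
        rw [dif_pos hSne]
        refine le_trans ?_ (le_sup' (r p) hjS)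
        rw [hrq p j hjlt]
        calc p ≤ q (n + 1) := hp2 (by omega)
          _ ≤ q ((j : ℕ) + 1) := hqmono _ _ (by omega) (by omega)
      rw [maxCost_insert_pair _ _ hSne, hri, sup_eq_right.mpr hcS, sub_self, mul_zero]
    have hterm : ∀ S ∈ (idxSet M n).powerset,
        sw M S.card * (maxCost M (r p) (insert i S) - maxCost M (r p) S)
          = sw M S.card * (p - maxCost M (r p) S) := by
      intro S hS
      rw [mem_powerset] at hS
      have hcle : maxCost M (r p) S ≤ p := by
        unfold maxCost
        split_ifs with h
        · apply sup'_le
          intro j hj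
          have hjn : (j : ℕ) < n := mem_idxSet.mp (hS hj)
          rw [hrq p j (by omega)]
          calc q ((j : ℕ) + 1) ≤ q n := hqmono _ _ (by omega) (by omega)
            _ ≤ p := hp1
        · exact hp0
      have hins : maxCost M (r p) (insert i S) = p := by
        rcases S.eq_empty_or_nonempty with h | h
        · subst h
          rw [maxCost_insert_eq (r p) (by simp)]
          exact hri p
        · rw [maxCost_insert_pair _ _ h, hri, sup_eq_left.mpr hcle]
      rw [hins]
    have hWn : ∑ S ∈ (idxSet M n).powerset, sw M S.card = 1 / ((M : ℝ) - n) := by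
      have h1 := sw_sum M (idxSet M n) (by rw [card_idxSet M n (by omega)]; omega)
      rwa [card_idxSet M n (by omega)] at h1
    have hG := Gval M hM q hqmono (r p)
      (fun j hj => hrq p j (by omega)) n hn
    calc F p = ∑ S ∈ (idxSet M n).powerset,
          sw M S.card * (maxCost M (r p) (insert i S) - maxCost M (r p) S) := by
          rw [hFdef p]
          exact (Finset.sum_subset (powerset_mono.mpr hsubset) hvanish).symm
      _ = ∑ S ∈ (idxSet M n).powerset, sw M S.card * (p - maxCost M (r p) S) :=
          Finset.sum_congr rfl hterm
      _ = (∑ S ∈ (idxSet M n).powerset, sw M S.card) * p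
            - ∑ S ∈ (idxSet M n).powerset, sw M S.card * maxCost M (r p) S := by
          rw [Finset.sum_mul, ← Finset.sum_sub_distrib]
          exact Finset.sum_congr rfl fun S _ => by ring
      _ = p / ((M : ℝ) - n)
          - ∑ k ∈ Finset.range n, q (k + 1) / (((M : ℝ) - (k + 1)) * ((M : ℝ) - k)) := by
          rw [hWn, hG]
          congr 1
          · rw [one_div, inv_mul_eq_div]
          · apply Finset.sum_congr rfl
            intro k hk
            rw [mem_range] at hk
            have hk1 : (k + 1 : ℕ) < M := by omega
            have h1 : 0 < (M : ℝ) - (k + 1) := by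
              have : ((k + 1 : ℕ) : ℝ) < (M : ℝ) := Nat.cast_lt.mpr hk1
              push_cast at this
              linarith
            have h2 : 0 < (M : ℝ) - k := by linarith
            field_simp
            ring
  · -- monotone and continuous
    set r' : Fin M → ℝ := fun j => if (j : ℕ) + 1 < M then q ((j : ℕ) + 1) else 0 with hr'def
    have hkey : ∀ p, F p = ∑ S ∈ (Finset.univ.erase i).powerset,
        sw M S.card * ((if S.Nonempty then p ⊔ maxCost M r' S else p) - maxCost M r' S) := by
      intro p
      rw [hFdef p]
      apply Finset.sum_congr rfl
      intro S hS
      rw [mem_powerset] at hS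
      have hagree : ∀ j ∈ S, r p j = r' j := by
        intro j hj
        have hjlt : (j : ℕ) < M - 1 := hjerase j (hS hj)
        show (if (j : ℕ) + 1 < M then q ((j : ℕ) + 1) else p)
          = (if (j : ℕ) + 1 < M then q ((j : ℕ) + 1) else 0)
        rw [if_pos (by omega), if_pos (by omega)]
      have h1 : maxCost M (r p) S = maxCost M r' S := by
        unfold maxCost
        split_ifs with h
        · exact sup'_congr h rfl hagree
        · rfl
      rw [h1]
      congr 1
      congr 1
      split_ifs with h
      · rw [maxCost_insert_pair _ _ h, hri, h1]
      · have : S = ∅ := not_nonempty_iff_eq_empty.mp h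
        subst this
        rw [maxCost_insert_eq (r p) (by simp)]
        exact hri p
    have hmono : Monotone F := by
      intro a b hab
      rw [hkey a, hkey b]
      apply Finset.sum_le_sum
      intro S _
      apply mul_le_mul_of_nonneg_left _ (sw_nonneg M S.card)
      apply sub_le_sub_right
      split_ifs with h
      · exact sup_le_sup_right hab _
      · exact hab
    have hcont : Continuous F := by
      have hc : Continuous (fun p : ℝ => ∑ S ∈ (Finset.univ.erase i).powerset,
          sw M S.card * ((if S.Nonempty then p ⊔ maxCost M r' S else p) - maxCost M r' S)) := by
        apply continuous_finset_sum
        intro S _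
        apply Continuous.mul continuous_const
        apply Continuous.sub _ continuous_const
        by_cases h : S.Nonempty
        · simp only [if_pos h]
          exact continuous_id.sup continuous_const
        · simp only [if_neg h]
          exact continuous_id
      exact hc.congr fun p => (hkey p).symm
    exact ⟨hmono.monotoneOn _, hcont.continuousOn⟩
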